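/- Let 𝒳 be the set of invertible 2×2 real matrices and define g : 𝒳 → ℝ by g(X) = |det X| / 2, the area of the triangle formed by the two columns of X and the origin. Let I be the family of transformations of 𝒳 consisting of: (i) X ↦ R_θ · X for each θ ∈ [0, π/4], where R_θ is the rotation matrix with rows (cos θ, −sin θ) and (sin θ, cos θ); (ii) X ↦ X · diag(a, a⁻¹) for each a ∈ [2/3, 3/2]; (iii) X ↦ X · diag(−1, 1); (iv) X ↦ X · S, where S is the shear matrix with rows (1, 1) and (0, 1); and (v) X ↦ X · (−I₂). Then I is a causal essential set for g: every transformation in I preserves |det| (hence preserves g and maps 𝒳 to 𝒳), and for any two invertible 2×2 real matrices X₁, X₂ with |det X₁| = |det X₂| there exist finitely many transformations T₁, …, T_K ∈ I such that (T₁ ∘ ⋯ ∘ T_K)(X₁) = X₂. -/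

import Mathlib

open Matrix

/-- A family `I` of transformations `T : X → X` is a causal essential set for `h` if
`h ∘ T = h` for every `T ∈ I`, and for all `x₁, x₂` with `h x₁ = h x₂` there are finitely
many `T₁, …, T_K ∈ I` such that `(T₁ ∘ ⋯ ∘ T_K) x₁ = x₂`. -/
def IsCausalEssentialSet {X V : Type*} (h : X → V) (I : Set (X → X)) : Prop :=
  (∀ T ∈ I, h ∘ T = h) ∧
    ∀ x₁ x₂ : X, h x₁ = h x₂ →
      ∃ l : List (X → X), (∀ T ∈ l, T ∈ I) ∧ l.foldr (· ∘ ·) id x₁ = x₂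

/-- The rotation matrix with angle `θ`. -/
noncomputable def rotM (θ : ℝ) : Matrix (Fin 2) (Fin 2) ℝ :=
  !![Real.cos θ, -Real.sin θ; Real.sin θ, Real.cos θ]

/-- The diagonal matrix `diag(p, q)`. -/
def diagM (p q : ℝ) : Matrix (Fin 2) (Fin 2) ℝ := !![p, 0; 0, q]

/-- The shear matrix with rows `(1, 1)` and `(0, 1)`. -/
def shearM : Matrix (Fin 2) (Fin 2) ℝ := !![1, 1; 0, 1]

namespace Stmt13Aux

abbrev M2 := Matrix (Fin 2) (Fin 2) ℝ
abbrev Inv2 := {A : M2 // A.det ≠ 0}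

def gens : Set (Inv2 → Inv2) :=
  {T : Inv2 → Inv2 |
        (∃ θ ∈ Set.Icc (0 : ℝ) (Real.pi / 4), ∀ A, (T A).val = rotM θ * A.val) ∨
        (∃ a ∈ Set.Icc (2 / 3 : ℝ) (3 / 2 : ℝ), ∀ A, (T A).val = A.val * diagM a a⁻¹) ∨
        (∀ A, (T A).val = A.val * diagM (-1) 1) ∨
        (∀ A, (T A).val = A.val * shearM) ∨
        (∀ A, (T A).val = A.val * (-(1 : Matrix (Fin 2) (Fin 2) ℝ)))}

def Rel (x y : Inv2) : Prop :=
  ∃ l : List (Inv2 → Inv2), (∀ T ∈ l, T ∈ gens) ∧ l.foldr (· ∘ ·) id x = y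

lemma rel_refl (x : Inv2) : Rel x x := ⟨[], by simp, rfl⟩

lemma foldr_comp_apply (l : List (Inv2 → Inv2)) (c : Inv2 → Inv2) :
    l.foldr (· ∘ ·) c = (l.foldr (· ∘ ·) id) ∘ c := by
  induction l with
  | nil => rfl
  | cons a l ih => simp [List.foldr_cons, ih, Function.comp_assoc]

lemma rel_trans {x y z : Inv2} (h1 : Rel x y) (h2 : Rel y z) : Rel x z := by
  obtain ⟨l1, hl1, he1⟩ := h1
  obtain ⟨l2, hl2, he2⟩ := h2
  refine ⟨l2 ++ l1, ?_, ?_⟩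
  · intro T hT; rcases List.mem_append.1 hT with h | h
    · exact hl2 T h
    · exact hl1 T h
  · rw [List.foldr_append, foldr_comp_apply]
    simp only [Function.comp_apply, he1, he2]

lemma rel_single {T : Inv2 → Inv2} (hT : T ∈ gens) (x : Inv2) : Rel x (T x) :=
  ⟨[T], by simpa using hT, rfl⟩

/-! ### Determinant facts -/

lemma det_rotM (θ : ℝ) : (rotM θ).det = 1 := by
  simp [rotM, Matrix.det_fin_two_of]
  nlinarith [Real.sin_sq_add_cos_sq θ]

lemma det_diagM (p q : ℝ) : (diagM p q).det = p * q := by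
  simp [diagM, Matrix.det_fin_two_of]

lemma det_shearM : shearM.det = 1 := by simp [shearM, Matrix.det_fin_two_of]

/-! ### Matrix identities -/

lemma rotM_add (a b : ℝ) : rotM (a + b) = rotM a * rotM b := by
  ext i j
  fin_cases i <;> fin_cases j <;>
    simp [rotM, Matrix.mul_apply, Fin.sum_univ_two, Real.cos_add, Real.sin_add] <;> ring

lemma rotM_zero : rotM 0 = 1 := by
  ext i j
  fin_cases i <;> fin_cases j <;> simp [rotM, Matrix.one_apply]

lemma rotM_period (θ : ℝ) (n : ℕ) : rotM (θ + n * (2 * Real.pi)) = rotM θ := by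
  unfold rotM
  rw [Real.cos_add_nat_mul_two_pi, Real.sin_add_nat_mul_two_pi]

lemma diagM_one : diagM 1 1 = 1 := by
  ext i j; fin_cases i <;> fin_cases j <;> simp [diagM, Matrix.one_apply]

lemma diagM_mul (a b c d : ℝ) : diagM a b * diagM c d = diagM (a*c) (b*d) := by
  ext i j; fin_cases i <;> fin_cases j <;>
    simp [diagM, Matrix.mul_apply, Fin.sum_univ_two]

lemma diag_shear_conj (a : ℝ) (ha : a ≠ 0) :
    diagM a a⁻¹ * shearM * diagM a⁻¹ (a⁻¹)⁻¹ = !![1, a^2; 0, 1] := by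
  ext i j; fin_cases i <;> fin_cases j <;>
    (try simp [diagM, shearM, Matrix.mul_apply, Fin.sum_univ_two, mul_inv_cancel₀ ha,
      inv_mul_cancel₀ ha]) <;>
    first
      | rfl
      | ring
      | field_simp

lemma mirror_shear_conj (t : ℝ) :
    diagM (-1) 1 * !![1, t; 0, 1] * diagM (-1) 1 = !![1, -t; 0, 1] := by
  ext i j; fin_cases i <;> fin_cases j <;>
    (try simp [diagM, Matrix.mul_apply, Fin.sum_univ_two]) <;> try ring

lemma neg_one_eq : (-(1 : M2)) = diagM (-1) (-1) := by
  ext i j; fin_cases i <;> fin_cases j <;> simp [diagM, Matrix.one_apply]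

lemma sign_diag_shear (e1 e2 t u : ℝ) :
    diagM e1 e2 * diagM t t⁻¹ * !![1, u; 0, 1] = !![e1*t, e1*t*u; 0, e2*t⁻¹] := by
  ext i j; fin_cases i <;> fin_cases j <;>
    (try simp [diagM, Matrix.mul_apply, Fin.sum_univ_two]) <;> try ring

/-! ### Explicit transformations and membership -/

noncomputable def rotT (θ : ℝ) : Inv2 → Inv2 := fun A =>
  ⟨rotM θ * A.val, by rw [det_mul, det_rotM, one_mul]; exact A.2⟩

def rmulT (M : M2) (hM : M.det ≠ 0) : Inv2 → Inv2 := fun A =>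
  ⟨A.val * M, by rw [det_mul]; exact mul_ne_zero A.2 hM⟩

lemma rotT_mem {θ : ℝ} (hθ : θ ∈ Set.Icc (0:ℝ) (Real.pi / 4)) : rotT θ ∈ gens :=
  Or.inl ⟨θ, hθ, fun _ => rfl⟩

lemma scaleT_mem {a : ℝ} (ha : a ∈ Set.Icc (2/3 : ℝ) (3/2 : ℝ)) :
    rmulT (diagM a a⁻¹)
      (by rw [det_diagM, mul_inv_cancel₀ (by linarith [ha.1] : a ≠ 0)]; norm_num) ∈ gens :=
  Or.inr (Or.inl ⟨a, ha, fun _ => rfl⟩)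

lemma mirrorT_mem : rmulT (diagM (-1) 1) (by rw [det_diagM]; norm_num) ∈ gens :=
  Or.inr (Or.inr (Or.inl (fun _ => rfl)))

lemma shearT_mem : rmulT shearM (by rw [det_shearM]; norm_num) ∈ gens :=
  Or.inr (Or.inr (Or.inr (Or.inl (fun _ => rfl))))

lemma negT_mem : rmulT (-(1 : M2)) (by simp [Matrix.det_neg]) ∈ gens :=
  Or.inr (Or.inr (Or.inr (Or.inr (fun _ => rfl))))

/-! ### Basic step lemmas -/

lemma rel_rot_small {θ : ℝ} (hθ : θ ∈ Set.Icc (0:ℝ) (Real.pi / 4)) (x y : Inv2)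
    (h : y.val = rotM θ * x.val) : Rel x y := by
  have : y = rotT θ x := Subtype.ext h
  rw [this]; exact rel_single (rotT_mem hθ) x

lemma rel_rmul {M : M2} (hM : M.det ≠ 0) (hmem : rmulT M hM ∈ gens) (x y : Inv2)
    (h : y.val = x.val * M) : Rel x y := by
  have : y = rmulT M hM x := Subtype.ext h
  rw [this]; exact rel_single hmem x

lemma rel_of_val_eq {x y : Inv2} (h : y.val = x.val) : Rel x y := by
  have : y = x := Subtype.ext h
  rw [this]; exact rel_refl x

/-! ### Arbitrary rotations -/

lemma rel_rot_nat (n : ℕ) (α : ℝ) (hα : α ∈ Set.Icc (0:ℝ) (Real.pi / 4)) :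
    ∀ x y : Inv2, y.val = rotM (n * α) * x.val → Rel x y := by
  induction n with
  | zero =>
    intro x y h
    apply rel_of_val_eq
    rw [h]; push_cast; rw [zero_mul, rotM_zero, one_mul]
  | succ n ih =>
    intro x y h
    have hz : ((rotM (n * α) * x.val : M2)).det ≠ 0 := by
      rw [det_mul, det_rotM, one_mul]; exact x.2
    set z : Inv2 := ⟨rotM (n * α) * x.val, hz⟩ with hzdef
    have h1 : Rel x z := ih x z rfl
    have h2 : Rel z y := by
      apply rel_rot_small hα z y
      rw [h, hzdef]
      have : ((n : ℝ) + 1) * α = α + n * α := by ring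
      push_cast
      rw [this, rotM_add, mul_assoc]
    exact rel_trans h1 h2

lemma rel_rot_nonneg (θ : ℝ) (hθ : 0 ≤ θ) (x y : Inv2)
    (h : y.val = rotM θ * x.val) : Rel x y := by
  have hpi : 0 < Real.pi / 4 := by positivity
  obtain ⟨m, hm⟩ := exists_nat_ge (θ / (Real.pi / 4))
  set n := m + 1 with hn
  have hnpos : 0 < (n : ℝ) := by positivity
  have hα : θ / n ∈ Set.Icc (0:ℝ) (Real.pi / 4) := by
    constructor
    · positivity
    · rw [div_le_iff₀ hnpos]
      have : θ / (Real.pi / 4) ≤ n := by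
        push_cast [hn]; linarith
      calc θ = (θ / (Real.pi / 4)) * (Real.pi / 4) := by field_simp
        _ ≤ n * (Real.pi / 4) := by
            apply mul_le_mul_of_nonneg_right this (le_of_lt hpi)
        _ = Real.pi / 4 * n := by ring
  apply rel_rot_nat n (θ / n) hα x y
  rw [h]
  congr 1
  field_simp

lemma rel_rot_any (θ : ℝ) (x y : Inv2) (h : y.val = rotM θ * x.val) : Rel x y := by
  have h2pi : 0 < 2 * Real.pi := by positivity
  obtain ⟨k, hk⟩ := exists_nat_ge (-θ / (2 * Real.pi))
  have hge : 0 ≤ θ + k * (2 * Real.pi) := by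
    have : -θ ≤ k * (2 * Real.pi) := by
      rw [div_le_iff₀ h2pi] at hk; linarith
    linarith
  apply rel_rot_nonneg (θ + k * (2 * Real.pi)) hge x y
  rw [rotM_period, h]

/-! ### Arbitrary positive scalings -/

lemma rel_scale_small {a : ℝ} (ha : a ∈ Set.Icc (2/3 : ℝ) (3/2 : ℝ)) (x y : Inv2)
    (h : y.val = x.val * diagM a a⁻¹) : Rel x y :=
  rel_rmul _ (scaleT_mem ha) x y h

lemma det_diag_inv {t : ℝ} (ht : t ≠ 0) : (diagM t t⁻¹).det ≠ 0 := by
  rw [det_diagM, mul_inv_cancel₀ ht]; norm_num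

lemma rel_scale_pow : ∀ n : ℕ, ∀ t : ℝ, (2/3:ℝ)^n ≤ t → t ≤ (3/2:ℝ)^n →
    ∀ x y : Inv2, y.val = x.val * diagM t t⁻¹ → Rel x y := by
  intro n
  induction n with
  | zero =>
    intro t h1 h2 x y h
    simp only [pow_zero] at h1 h2
    have ht : t = 1 := le_antisymm h2 h1
    apply rel_of_val_eq
    rw [h, ht]; norm_num [diagM_one]
  | succ n ih =>
    intro t h1 h2 x y h
    have hpow : (0:ℝ) < (2/3:ℝ)^(n+1) := by positivity
    have ht0 : 0 < t := lt_of_lt_of_le hpow h1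
    have htne : t ≠ 0 := ne_of_gt ht0
    by_cases hc : t ≤ 3/2
    · by_cases hc' : 2/3 ≤ t
      · exact rel_scale_small ⟨hc', hc⟩ x y h
      · push_neg at hc'
        set t' := t * (3/2) with ht'
        have ht'ne : t' ≠ 0 := by rw [ht']; positivity
        have hb1 : (2/3:ℝ)^n ≤ t' := by
          rw [ht']
          calc (2/3:ℝ)^n = (2/3:ℝ)^(n+1) * (3/2) := by ring
            _ ≤ t * (3/2) := by linarith
        have hb2 : t' ≤ (3/2:ℝ)^n := by
          have h3 : (1:ℝ) ≤ (3/2:ℝ)^n := one_le_pow₀ (by norm_num)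
          rw [ht']; nlinarith
        have hz : ((x.val * diagM t' t'⁻¹ : M2)).det ≠ 0 :=
          by rw [det_mul]; exact mul_ne_zero x.2 (det_diag_inv ht'ne)
        set z : Inv2 := ⟨x.val * diagM t' t'⁻¹, hz⟩ with hzdef
        have hxz : Rel x z := ih t' hb1 hb2 x z rfl
        have hzy : Rel z y := by
          apply rel_scale_small (a := 2/3) (by norm_num) z y
          rw [h]
          show x.val * diagM t t⁻¹ = x.val * diagM t' t'⁻¹ * diagM (2/3) (2/3)⁻¹
          have e1 : t' * (2/3) = t := by rw [ht']; ring
          have e2 : t'⁻¹ * (2/3)⁻¹ = t⁻¹ := by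
            rw [ht', mul_inv]
            norm_num
            field_simp
          rw [mul_assoc, diagM_mul, e1, e2]
        exact rel_trans hxz hzy
    · push_neg at hc
      set t' := t * (2/3) with ht'
      have ht'ne : t' ≠ 0 := by rw [ht']; positivity
      have hb1 : (2/3:ℝ)^n ≤ t' := by
        have h3 : (2/3:ℝ)^n ≤ 1 := pow_le_one₀ (by norm_num) (by norm_num)
        rw [ht']; nlinarith
      have hb2 : t' ≤ (3/2:ℝ)^n := by
        rw [ht']
        calc t * (2/3) ≤ (3/2:ℝ)^(n+1) * (2/3) := by linarith
          _ = (3/2:ℝ)^n := by ring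
      have hz : ((x.val * diagM t' t'⁻¹ : M2)).det ≠ 0 :=
        by rw [det_mul]; exact mul_ne_zero x.2 (det_diag_inv ht'ne)
      set z : Inv2 := ⟨x.val * diagM t' t'⁻¹, hz⟩ with hzdef
      have hxz : Rel x z := ih t' hb1 hb2 x z rfl
      have hzy : Rel z y := by
        apply rel_scale_small (a := 3/2) (by norm_num) z y
        rw [h]
        show x.val * diagM t t⁻¹ = x.val * diagM t' t'⁻¹ * diagM (3/2) (3/2)⁻¹
        have e1 : t' * (3/2) = t := by rw [ht']; ring
        have e2 : t'⁻¹ * (3/2)⁻¹ = t⁻¹ := by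
          rw [ht', mul_inv]
          norm_num
          field_simp
        rw [mul_assoc, diagM_mul, e1, e2]
      exact rel_trans hxz hzy

lemma rel_scale_pos {t : ℝ} (ht : 0 < t) (x y : Inv2)
    (h : y.val = x.val * diagM t t⁻¹) : Rel x y := by
  obtain ⟨n1, hn1⟩ := pow_unbounded_of_one_lt t (by norm_num : (1:ℝ) < 3/2)
  obtain ⟨n2, hn2⟩ := pow_unbounded_of_one_lt t⁻¹ (by norm_num : (1:ℝ) < 3/2)
  set n := max n1 n2 with hn
  have hup : t ≤ (3/2:ℝ)^n := by
    calc t ≤ (3/2:ℝ)^n1 := le_of_lt hn1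
      _ ≤ (3/2:ℝ)^n := pow_le_pow_right₀ (by norm_num) (le_max_left _ _)
  have hlow : (2/3:ℝ)^n ≤ t := by
    have h1 : t⁻¹ ≤ (3/2:ℝ)^n := by
      calc t⁻¹ ≤ (3/2:ℝ)^n2 := le_of_lt hn2
        _ ≤ (3/2:ℝ)^n := pow_le_pow_right₀ (by norm_num) (le_max_right _ _)
    have hP : (0:ℝ) < (3/2:ℝ)^n := by positivity
    have hmul : 1 ≤ t * (3/2:ℝ)^n := by
      calc (1:ℝ) = t * t⁻¹ := (mul_inv_cancel₀ (ne_of_gt ht)).symm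
        _ ≤ t * (3/2:ℝ)^n := by nlinarith
    have h2 : ((3/2:ℝ)^n)⁻¹ ≤ t := by
      rw [inv_eq_one_div, div_le_iff₀ hP]
      linarith
    calc (2/3:ℝ)^n = ((3/2:ℝ)^n)⁻¹ := by
          rw [← inv_pow]; norm_num
      _ ≤ t := h2
  exact rel_scale_pow n t hlow hup x y h

/-! ### Arbitrary shears -/

lemma rel_shear_nonneg {t : ℝ} (ht : 0 ≤ t) (x y : Inv2)
    (h : y.val = x.val * !![1, t; 0, 1]) : Rel x y := by
  rcases eq_or_lt_of_le ht with rfl | htpos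
  · apply rel_of_val_eq
    rw [h]
    have : (!![1, (0:ℝ); 0, 1] : M2) = 1 := by
      ext i j; fin_cases i <;> fin_cases j <;> simp [Matrix.one_apply]
    rw [this, mul_one]
  · set a := Real.sqrt t with ha
    have hapos : 0 < a := Real.sqrt_pos.mpr htpos
    have hane : a ≠ 0 := ne_of_gt hapos
    have ha2 : a^2 = t := Real.sq_sqrt ht
    have hz1 : ((x.val * diagM a a⁻¹ : M2)).det ≠ 0 := by
      rw [det_mul]; exact mul_ne_zero x.2 (det_diag_inv hane)
    set z1 : Inv2 := ⟨x.val * diagM a a⁻¹, hz1⟩ with hz1def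
    have hz2 : ((z1.val * shearM : M2)).det ≠ 0 := by
      rw [det_mul, det_shearM, mul_one]; exact z1.2
    set z2 : Inv2 := ⟨z1.val * shearM, hz2⟩ with hz2def
    have r1 : Rel x z1 := rel_scale_pos hapos x z1 rfl
    have r2 : Rel z1 z2 := rel_rmul _ shearT_mem z1 z2 rfl
    have r3 : Rel z2 y := by
      apply rel_scale_pos (t := a⁻¹) (by positivity) z2 y
      rw [h]
      show x.val * !![1, t; 0, 1] = x.val * diagM a a⁻¹ * shearM * diagM a⁻¹ (a⁻¹)⁻¹
      rw [mul_assoc, mul_assoc, ← mul_assoc (diagM a a⁻¹), diag_shear_conj a hane, ha2]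
    exact rel_trans r1 (rel_trans r2 r3)

lemma rel_shear_any (t : ℝ) (x y : Inv2)
    (h : y.val = x.val * !![1, t; 0, 1]) : Rel x y := by
  rcases le_or_gt 0 t with ht | ht
  · exact rel_shear_nonneg ht x y h
  · have hdm : (diagM (-1) (1:ℝ)).det ≠ 0 := by rw [det_diagM]; norm_num
    have hz1 : ((x.val * diagM (-1) 1 : M2)).det ≠ 0 := by
      rw [det_mul]; exact mul_ne_zero x.2 hdm
    set z1 : Inv2 := ⟨x.val * diagM (-1) 1, hz1⟩ with hz1def
    have hsh : ((!![1, -t; 0, 1] : M2)).det ≠ 0 := by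
      rw [Matrix.det_fin_two_of]; norm_num
    have hz2 : ((z1.val * !![1, -t; 0, 1] : M2)).det ≠ 0 := by
      rw [det_mul]; exact mul_ne_zero z1.2 hsh
    set z2 : Inv2 := ⟨z1.val * !![1, -t; 0, 1], hz2⟩ with hz2def
    have r1 : Rel x z1 := rel_rmul _ mirrorT_mem x z1 rfl
    have r2 : Rel z1 z2 := rel_shear_nonneg (by linarith) z1 z2 rfl
    have r3 : Rel z2 y := by
      apply rel_rmul _ mirrorT_mem z2 y
      rw [h]
      show x.val * !![1, t; 0, 1] = x.val * diagM (-1) 1 * !![1, -t; 0, 1] * diagM (-1) 1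
      rw [mul_assoc, mul_assoc, ← mul_assoc (diagM (-1) 1), mirror_shear_conj, neg_neg]
    exact rel_trans r1 (rel_trans r2 r3)

/-! ### Sign matrices -/

lemma rel_signs {e1 e2 : ℝ} (he1 : e1 = 1 ∨ e1 = -1) (he2 : e2 = 1 ∨ e2 = -1)
    (x y : Inv2) (h : y.val = x.val * diagM e1 e2) : Rel x y := by
  rcases he1 with rfl | rfl <;> rcases he2 with rfl | rfl
  · apply rel_of_val_eq; rw [h, diagM_one, mul_one]
  · -- diag(1, -1) = diag(-1,1) * (-1)
    have hdm : (diagM (-1) (1:ℝ)).det ≠ 0 := by rw [det_diagM]; norm_num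
    have hz1 : ((x.val * diagM (-1) 1 : M2)).det ≠ 0 := by
      rw [det_mul]; exact mul_ne_zero x.2 hdm
    set z1 : Inv2 := ⟨x.val * diagM (-1) 1, hz1⟩ with hz1def
    have r1 : Rel x z1 := rel_rmul _ mirrorT_mem x z1 rfl
    have r2 : Rel z1 y := by
      apply rel_rmul _ negT_mem z1 y
      rw [h]
      show x.val * diagM 1 (-1) = x.val * diagM (-1) 1 * -(1:M2)
      rw [neg_one_eq, mul_assoc, diagM_mul]
      norm_num
    exact rel_trans r1 r2
  · exact rel_rmul _ mirrorT_mem x y h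
  · apply rel_rmul _ negT_mem x y
    rw [h, neg_one_eq]

/-! ### Upper triangular matrices with |det| = 1 -/

lemma rel_upper {p s q : ℝ} (hp : p ≠ 0) (hq : |p * q| = 1) (x y : Inv2)
    (h : y.val = x.val * !![p, s; 0, q]) : Rel x y := by
  have hqne : q ≠ 0 := by
    intro h0; rw [h0, mul_zero, abs_zero] at hq; norm_num at hq
  obtain ⟨e1, he1def⟩ : ∃ e : ℝ, e = if 0 < p then 1 else -1 := ⟨_, rfl⟩
  obtain ⟨e2, he2def⟩ : ∃ e : ℝ, e = if 0 < q then 1 else -1 := ⟨_, rfl⟩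
  have he1 : e1 = 1 ∨ e1 = -1 := by rw [he1def]; split <;> simp
  have he2 : e2 = 1 ∨ e2 = -1 := by rw [he2def]; split <;> simp
  have hep : e1 * |p| = p := by
    rw [he1def]; rcases lt_trichotomy 0 p with h' | h' | h'
    · rw [if_pos h', one_mul, abs_of_pos h']
    · exact absurd h'.symm hp
    · rw [if_neg (by linarith), abs_of_neg h']; ring
  have heq : e2 * |q| = q := by
    rw [he2def]; rcases lt_trichotomy 0 q with h' | h' | h'
    · rw [if_pos h', one_mul, abs_of_pos h']
    · exact absurd h'.symm hqne
    · rw [if_neg (by linarith), abs_of_neg h']; ring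
  have habs : |q| = |p|⁻¹ := by
    rw [abs_mul] at hq
    field_simp
    linarith [hq]
  obtain ⟨t, htdef⟩ : ∃ t : ℝ, t = |p| := ⟨_, rfl⟩
  have htpos : 0 < t := htdef ▸ abs_pos.mpr hp
  obtain ⟨u, hudef⟩ : ∃ u : ℝ, u = s / p := ⟨_, rfl⟩
  -- chain: x → x * diag(e1,e2) → ... * diag(t, t⁻¹) → ... * shear u = y
  have hde : (diagM e1 e2).det ≠ 0 := by
    rw [det_diagM]
    rcases he1 with rfl | rfl <;> rcases he2 with rfl | rfl <;> norm_num
  have hz1 : ((x.val * diagM e1 e2 : M2)).det ≠ 0 := by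
    rw [det_mul]; exact mul_ne_zero x.2 hde
  set z1 : Inv2 := ⟨x.val * diagM e1 e2, hz1⟩ with hz1def
  have hz2 : ((z1.val * diagM t t⁻¹ : M2)).det ≠ 0 := by
    rw [det_mul]; exact mul_ne_zero z1.2 (det_diag_inv (ne_of_gt htpos))
  set z2 : Inv2 := ⟨z1.val * diagM t t⁻¹, hz2⟩ with hz2def
  have r1 : Rel x z1 := rel_signs he1 he2 x z1 rfl
  have r2 : Rel z1 z2 := rel_scale_pos htpos z1 z2 rfl
  have r3 : Rel z2 y := by
    apply rel_shear_any u z2 y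
    rw [h]
    show x.val * !![p, s; 0, q] = x.val * diagM e1 e2 * diagM t t⁻¹ * !![1, u; 0, 1]
    rw [mul_assoc, mul_assoc, ← mul_assoc (diagM e1 e2), sign_diag_shear]
    congr 1
    have h1 : e1 * t = p := by rw [htdef]; exact hep
    have h2 : e2 * t⁻¹ = q := by rw [htdef, ← habs]; exact heq
    have h3 : e1 * t * u = s := by rw [h1, hudef]; field_simp
    rw [h3, h2, h1]
  exact rel_trans r1 (rel_trans r2 r3)

/-! ### QR decomposition -/

lemma exists_cos_sin {a b : ℝ} (h : a^2 + b^2 = 1) :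
    ∃ θ, Real.cos θ = a ∧ Real.sin θ = b := by
  have ha1 : -1 ≤ a := by nlinarith
  have ha2 : a ≤ 1 := by nlinarith
  have hb2 : 1 - a^2 = b^2 := by nlinarith
  rcases le_or_gt 0 b with hb | hb
  · exact ⟨Real.arccos a, Real.cos_arccos ha1 ha2, by
      rw [Real.sin_arccos, hb2, Real.sqrt_sq hb]⟩
  · refine ⟨-Real.arccos a, by rw [Real.cos_neg, Real.cos_arccos ha1 ha2], ?_⟩
    rw [Real.sin_neg, Real.sin_arccos, hb2, Real.sqrt_sq_eq_abs, abs_of_neg hb, neg_neg]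

lemma exists_rot_upper (X : M2) (hX : X.det ≠ 0) :
    ∃ θ p s q, p * q = X.det ∧ X = rotM θ * !![p, s; 0, q] := by
  obtain ⟨x, hx⟩ : ∃ x, X 0 0 = x := ⟨_, rfl⟩
  obtain ⟨y, hy⟩ : ∃ y, X 0 1 = y := ⟨_, rfl⟩
  obtain ⟨z, hz⟩ : ∃ z, X 1 0 = z := ⟨_, rfl⟩
  obtain ⟨w, hw⟩ : ∃ w, X 1 1 = w := ⟨_, rfl⟩
  have hdet : X.det = x * w - y * z := by rw [Matrix.det_fin_two, hx, hy, hz, hw]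
  have hxz : x ≠ 0 ∨ z ≠ 0 := by
    by_contra hc
    push_neg at hc
    apply hX
    rw [hdet, hc.1, hc.2]; ring
  have hpos : 0 < x^2 + z^2 := by
    rcases hxz with h | h
    · have : 0 < x^2 := by positivity
      nlinarith [sq_nonneg z]
    · have : 0 < z^2 := by positivity
      nlinarith [sq_nonneg x]
  obtain ⟨r, hr⟩ : ∃ r, r = Real.sqrt (x^2 + z^2) := ⟨_, rfl⟩
  have hrpos : 0 < r := hr ▸ Real.sqrt_pos.mpr hpos
  have hr2 : r^2 = x^2 + z^2 := by rw [hr]; exact Real.sq_sqrt (le_of_lt hpos)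
  have hrne : r ≠ 0 := ne_of_gt hrpos
  have hab : (x/r)^2 + (z/r)^2 = 1 := by
    field_simp
    linarith [hr2]
  obtain ⟨θ, hcos, hsin⟩ := exists_cos_sin hab
  refine ⟨θ, r, (x/r)*y + (z/r)*w, -(z/r)*y + (x/r)*w, ?_, ?_⟩
  · rw [hdet]; field_simp; ring
  · ext i j
    fin_cases i <;> fin_cases j
    · simp only [Fin.zero_eta, Fin.isValue, rotM, Matrix.mul_apply, Fin.sum_univ_two,
        Matrix.cons_val', Matrix.cons_val_zero, Matrix.empty_val', Matrix.cons_val_fin_one,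
        Matrix.cons_val_one, Matrix.head_cons, Matrix.head_fin_const, Matrix.of_apply, hcos, hsin, hx]
      field_simp
      ring
    · simp only [Fin.zero_eta, Fin.isValue, Fin.mk_one, rotM, Matrix.mul_apply, Fin.sum_univ_two,
        Matrix.cons_val', Matrix.cons_val_zero, Matrix.empty_val', Matrix.cons_val_fin_one,
        Matrix.cons_val_one, Matrix.head_cons, Matrix.head_fin_const, Matrix.of_apply, hcos, hsin, hy]
      field_simp
      linear_combination y * hr2
    · simp only [Fin.zero_eta, Fin.isValue, Fin.mk_one, rotM, Matrix.mul_apply, Fin.sum_univ_two,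
        Matrix.cons_val', Matrix.cons_val_zero, Matrix.empty_val', Matrix.cons_val_fin_one,
        Matrix.cons_val_one, Matrix.head_cons, Matrix.head_fin_const, Matrix.of_apply, hcos, hsin, hz]
      field_simp
      ring
    · simp only [Fin.isValue, Fin.mk_one, rotM, Matrix.mul_apply, Fin.sum_univ_two,
        Matrix.cons_val', Matrix.cons_val_zero, Matrix.empty_val', Matrix.cons_val_fin_one,
        Matrix.cons_val_one, Matrix.head_cons, Matrix.head_fin_const, Matrix.of_apply, hcos, hsin, hw]
      field_simp
      linear_combination w * hr2

/-! ### The main connectivity result -/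

lemma rel_main (x1 x2 : Inv2) (habs : |x1.val.det| = |x2.val.det|) : Rel x1 x2 := by
  obtain ⟨θ1, p1, s1, q1, hpq1, hU1⟩ := exists_rot_upper x1.val x1.2
  obtain ⟨θ2, p2, s2, q2, hpq2, hU2⟩ := exists_rot_upper x2.val x2.2
  have hp1 : p1 ≠ 0 := by
    intro h0; apply x1.2; rw [← hpq1, h0, zero_mul]
  have hq1 : q1 ≠ 0 := by
    intro h0; apply x1.2; rw [← hpq1, h0, mul_zero]
  have hp2 : p2 ≠ 0 := by
    intro h0; apply x2.2; rw [← hpq2, h0, zero_mul]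
  have hq2 : q2 ≠ 0 := by
    intro h0; apply x2.2; rw [← hpq2, h0, mul_zero]
  -- the connecting upper triangular matrix
  set M : M2 := !![p2/p1, (q1*s2 - s1*q2)/(p1*q1); 0, q2/q1] with hM
  have hdetM : ((p2/p1) * (q2/q1) : ℝ) ≠ 0 := by positivity
  have habs1 : |p1 * q1| = |p2 * q2| := by rw [hpq1, hpq2]; exact habs
  have hMabs : |(p2/p1) * (q2/q1)| = 1 := by
    rw [abs_mul, abs_div, abs_div]
    rw [abs_mul, abs_mul] at habs1
    have h1 : |p1| ≠ 0 := abs_ne_zero.mpr hp1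
    have h2 : |q1| ≠ 0 := abs_ne_zero.mpr hq1
    field_simp
    linarith [habs1]
  have hzdet : ((x1.val * M : M2)).det ≠ 0 := by
    rw [det_mul]
    apply mul_ne_zero x1.2
    rw [hM, Matrix.det_fin_two_of]
    simpa using hdetM
  set z : Inv2 := ⟨x1.val * M, hzdet⟩ with hzdef
  have r1 : Rel x1 z := by
    apply rel_upper (p := p2/p1) (s := (q1*s2 - s1*q2)/(p1*q1)) (q := q2/q1)
      (by positivity) hMabs x1 z rfl
  have key : (!![p1, s1; 0, q1] : M2) * M = !![p2, s2; 0, q2] := by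
    rw [hM]
    ext i j
    fin_cases i <;> fin_cases j <;>
      (try simp [Matrix.mul_apply, Fin.sum_univ_two]) <;> field_simp <;> ring
  have r2 : Rel z x2 := by
    apply rel_rot_any (θ2 - θ1) z x2
    show x2.val = rotM (θ2 - θ1) * (x1.val * M)
    rw [hU1, hU2, mul_assoc, key, ← mul_assoc, ← rotM_add]
    norm_num
  exact rel_trans r1 r2

end Stmt13Aux

/-- Example: on the set `𝒳` of invertible `2 × 2` real matrices with
`g X = |det X| / 2` (the area of the triangle formed by the columns of `X` and the
origin), the family consisting of the rotations `X ↦ R_θ X` for `θ ∈ [0, π/4]`, the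
scalings `X ↦ X ⬝ diag(a, a⁻¹)` for `a ∈ [2/3, 3/2]`, the mirror `X ↦ X ⬝ diag(-1, 1)`,
the shear `X ↦ X ⬝ S`, and the point reflection `X ↦ X ⬝ (-I₂)` is a causal essential
set for `g`: each transformation preserves `|det|` (hence `g`, and maps `𝒳` to `𝒳`),
and any two invertible matrices with equal `|det|` are connected by finitely many of
these transformations. -/
theorem stmt_13 :
    IsCausalEssentialSet
      (fun A : {A : Matrix (Fin 2) (Fin 2) ℝ // A.det ≠ 0} => |A.val.det| / 2)
      {T : {A : Matrix (Fin 2) (Fin 2) ℝ // A.det ≠ 0} →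
           {A : Matrix (Fin 2) (Fin 2) ℝ // A.det ≠ 0} |
        (∃ θ ∈ Set.Icc (0 : ℝ) (Real.pi / 4), ∀ A, (T A).val = rotM θ * A.val) ∨
        (∃ a ∈ Set.Icc (2 / 3 : ℝ) (3 / 2 : ℝ), ∀ A, (T A).val = A.val * diagM a a⁻¹) ∨
        (∀ A, (T A).val = A.val * diagM (-1) 1) ∨
        (∀ A, (T A).val = A.val * shearM) ∨
        (∀ A, (T A).val = A.val * (-(1 : Matrix (Fin 2) (Fin 2) ℝ)))} := by
  constructor
  · intro T hT
    funext A
    simp only [Function.comp_apply]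
    rcases hT with ⟨θ, _, hval⟩ | ⟨a, ha, hval⟩ | hval | hval | hval
    · rw [hval A, det_mul, Stmt13Aux.det_rotM, one_mul]
    · rw [hval A, det_mul, Stmt13Aux.det_diagM,
        mul_inv_cancel₀ (by linarith [ha.1] : a ≠ 0), mul_one]
    · rw [hval A, det_mul, Stmt13Aux.det_diagM]
      rw [abs_mul]
      norm_num
    · rw [hval A, det_mul, Stmt13Aux.det_shearM, mul_one]
    · rw [hval A, det_mul]
      rw [abs_mul]
      simp [Matrix.det_neg]
  · intro x1 x2 h
    have habs : |x1.val.det| = |x2.val.det| := by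
      field_simp at h
      exact h
    exact Stmt13Aux.rel_main x1 x2 habs
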